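/- Runge-type theorem for the wave equation: let w be C² on the closed square R̄ = {(x,t) : |x|+|t| ≤ 2b} and satisfy w_xx - w_tt = 0 in its interior. Then for every ε > 0 there exists a finite linear combination P of the wave polynomials p_0, p_1, p_2, … such that sup_{(x,t) ∈ R̄} |w(x,t) - P(x,t)| < ε. -/

import Mathlib

open Set Filter Topology

/-- The wave polynomials: `p 0 = 1`,
`p (2n-1) (x,t) = ((x+t)^n + (x-t)^n)/2`, `p (2n) (x,t) = ((x+t)^n - (x-t)^n)/2`. -/
noncomputable def wavePoly (m : ℕ) (x t : ℝ) : ℝ :=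
  if m = 0 then 1
  else if m % 2 = 1 then ((x + t) ^ ((m + 1) / 2) + (x - t) ^ ((m + 1) / 2)) / 2
  else ((x + t) ^ (m / 2) - (x - t) ^ (m / 2)) / 2

lemma waveAux_sum (c d : ℕ → ℝ) (M : ℕ) (x t : ℝ) :
    ∑ m ∈ Finset.range (2*M+1),
      (if m = 0 then c 0 + d 0 else if m % 2 = 1 then c ((m+1)/2) + d ((m+1)/2)
        else c (m/2) - d (m/2)) * wavePoly m x t
      = ∑ n ∈ Finset.range (M+1), (c n * (x+t)^n + d n * (x-t)^n) := by
  induction M with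
  | zero => simp [wavePoly]
  | succ M ih =>
      have h1 : 2*(M+1)+1 = (2*M+1) + 1 + 1 := by ring
      rw [h1, Finset.sum_range_succ, Finset.sum_range_succ, ih]
      conv_rhs => rw [Finset.sum_range_succ]
      have e1 : wavePoly (2*M+1) x t = ((x+t)^(M+1) + (x-t)^(M+1))/2 := by
        have h0 : ¬ (2*M+1 = 0) := by omega
        have h2 : (2*M+1) % 2 = 1 := by omega
        have h3 : (2*M+1+1)/2 = M+1 := by omega
        simp only [wavePoly, if_neg h0, if_pos h2, h3]
      have e2 : wavePoly (2*M+1+1) x t = ((x+t)^(M+1) - (x-t)^(M+1))/2 := by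
        have h0 : ¬ (2*M+1+1 = 0) := by omega
        have h2 : ¬ ((2*M+1+1) % 2 = 1) := by omega
        have h3 : (2*M+1+1)/2 = M+1 := by omega
        simp only [wavePoly, if_neg h0, if_neg h2, h3]
      have c1 : (if 2*M+1 = 0 then c 0 + d 0 else if (2*M+1) % 2 = 1 then
          c ((2*M+1+1)/2) + d ((2*M+1+1)/2) else c ((2*M+1)/2) - d ((2*M+1)/2))
          = c (M+1) + d (M+1) := by
        have h0 : ¬ (2*M+1 = 0) := by omega
        have h2 : (2*M+1) % 2 = 1 := by omega
        have h3 : (2*M+1+1)/2 = M+1 := by omega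
        simp only [if_neg h0, if_pos h2, h3]
      have c2 : (if 2*M+1+1 = 0 then c 0 + d 0 else if (2*M+1+1) % 2 = 1 then
          c ((2*M+1+1+1)/2) + d ((2*M+1+1+1)/2) else c ((2*M+1+1)/2) - d ((2*M+1+1)/2))
          = c (M+1) - d (M+1) := by
        have h0 : ¬ (2*M+1+1 = 0) := by omega
        have h2 : ¬ ((2*M+1+1) % 2 = 1) := by omega
        have h3 : (2*M+1+1)/2 = M+1 := by omega
        simp only [if_neg h0, if_neg h2, h3]
      rw [e1, e2, c1, c2]
      ring



lemma waveAux_const {g : ℝ → ℝ} {s : Set ℝ} (hs : Convex ℝ s) (ho : IsOpen s)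
    (h : ∀ y ∈ s, HasDerivAt g 0 y) {x y : ℝ} (hx : x ∈ s) (hy : y ∈ s) : g x = g y := by
  refine hs.is_const_of_fderivWithin_eq_zero
    (fun z hz => ((h z hz).differentiableAt).differentiableWithinAt) (fun z hz => ?_) hx hy
  rw [fderivWithin_of_isOpen ho hz, (h z hz).hasFDerivAt.fderiv]
  ext
  simp

lemma waveAux_goursat (b : ℝ) (hb : 0 < b) (w : ℝ → ℝ → ℝ)
    (hw : ContDiffOn ℝ 2 (fun p : ℝ × ℝ => w p.1 p.2) {p : ℝ × ℝ | |p.1| + |p.2| ≤ 2 * b})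
    (hwave : ∀ x t : ℝ, |x| + |t| < 2 * b →
        deriv (fun y => deriv (fun z => w z t) y) x =
          deriv (fun s => deriv (fun z => w x z) s) t) :
    ∀ x t : ℝ, |x| + |t| ≤ 2 * b →
      w x t = w ((x+t)/2) ((x+t)/2) + w ((x-t)/2) (-((x-t)/2)) - w 0 0 := by
  set f : ℝ × ℝ → ℝ := fun p => w p.1 p.2 with hf
  set S : Set (ℝ × ℝ) := {p | |p.1| + |p.2| ≤ 2 * b} with hSdef
  set V : Set (ℝ × ℝ) := {p | |p.1| + |p.2| < 2 * b} with hVdef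
  have hVo : IsOpen V := isOpen_lt (continuous_fst.abs.add continuous_snd.abs) continuous_const
  have hVS : V ⊆ S := fun p hp => show |p.1| + |p.2| ≤ 2*b from le_of_lt hp
  have hfV : ContDiffOn ℝ 2 f V := hw.mono hVS
  have hfd : DifferentiableOn ℝ f V := hfV.differentiableOn two_ne_zero
  have hdf : ∀ p ∈ V, HasFDerivAt f (fderiv ℝ f p) p := fun p hp =>
    (hfd.differentiableAt (hVo.mem_nhds hp)).hasFDerivAt
  set f' := fderiv ℝ f with hf'
  have hf'c : ContDiffOn ℝ 1 f' V := hfV.fderiv_of_isOpen hVo (by norm_num)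
  have hf'd : DifferentiableOn ℝ f' V := hf'c.differentiableOn one_ne_zero
  have hdf' : ∀ p ∈ V, HasFDerivAt f' (fderiv ℝ f' p) p := fun p hp =>
    (hf'd.differentiableAt (hVo.mem_nhds hp)).hasFDerivAt
  set f'' := fderiv ℝ f' with hf''
  have hsymm : ∀ p ∈ V, ∀ u v : ℝ × ℝ, f'' p u v = f'' p v u := by
    intro p hp u v
    refine second_derivative_symmetric_of_eventually (f := f) ?_ (hdf' p hp) u v
    filter_upwards [hVo.mem_nhds hp] with q hq using hdf q hq
  -- first partial derivatives
  have hpx : ∀ x t : ℝ, (x, t) ∈ V → HasDerivAt (fun y => w y t) (f' (x, t) (1, 0)) x := by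
    intro x t hp
    have hline : HasDerivAt (fun y : ℝ => ((y, t) : ℝ × ℝ)) ((1 : ℝ), (0 : ℝ)) x :=
      (hasDerivAt_id x).prodMk (hasDerivAt_const x t)
    exact (hdf (x, t) hp).comp_hasDerivAt x hline
  have hpt : ∀ x t : ℝ, (x, t) ∈ V → HasDerivAt (fun s => w x s) (f' (x, t) (0, 1)) t := by
    intro x t hp
    have hline : HasDerivAt (fun s : ℝ => ((x, s) : ℝ × ℝ)) ((0 : ℝ), (1 : ℝ)) t :=
      (hasDerivAt_const t x).prodMk (hasDerivAt_id t)
    exact (hdf (x, t) hp).comp_hasDerivAt t hline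
  -- second partial derivatives
  have hpxx : ∀ x t : ℝ, (x, t) ∈ V →
      HasDerivAt (fun y => deriv (fun z => w z t) y) (f'' (x, t) (1, 0) (1, 0)) x := by
    intro x t hp
    have hline : HasDerivAt (fun y : ℝ => ((y, t) : ℝ × ℝ)) ((1 : ℝ), (0 : ℝ)) x :=
      (hasDerivAt_id x).prodMk (hasDerivAt_const x t)
    have hcurve : HasDerivAt (fun y => f' (y, t)) (f'' (x, t) (1, 0)) x :=
      (hdf' (x, t) hp).comp_hasDerivAt x hline
    have happ : HasDerivAt (fun y => f' (y, t) (1, 0)) (f'' (x, t) (1, 0) (1, 0)) x := by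
      simpa using hcurve.clm_apply (hasDerivAt_const x ((1 : ℝ), (0 : ℝ)))
    refine happ.congr_of_eventuallyEq ?_
    have hmem : {y : ℝ | (y, t) ∈ V} ∈ 𝓝 x := by
      have : Continuous (fun y : ℝ => ((y, t) : ℝ × ℝ)) := continuous_id.prodMk continuous_const
      exact (hVo.preimage this).mem_nhds hp
    filter_upwards [hmem] with y hy
    exact (hpx y t hy).deriv
  have hptt : ∀ x t : ℝ, (x, t) ∈ V →
      HasDerivAt (fun s => deriv (fun z => w x z) s) (f'' (x, t) (0, 1) (0, 1)) t := by
    intro x t hp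
    have hline : HasDerivAt (fun s : ℝ => ((x, s) : ℝ × ℝ)) ((0 : ℝ), (1 : ℝ)) t :=
      (hasDerivAt_const t x).prodMk (hasDerivAt_id t)
    have hcurve : HasDerivAt (fun s => f' (x, s)) (f'' (x, t) (0, 1)) t :=
      (hdf' (x, t) hp).comp_hasDerivAt t hline
    have happ : HasDerivAt (fun s => f' (x, s) (0, 1)) (f'' (x, t) (0, 1) (0, 1)) t := by
      simpa using hcurve.clm_apply (hasDerivAt_const t ((0 : ℝ), (1 : ℝ)))
    refine happ.congr_of_eventuallyEq ?_
    have hmem : {s : ℝ | (x, s) ∈ V} ∈ 𝓝 t := by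
      have : Continuous (fun s : ℝ => ((x, s) : ℝ × ℝ)) := continuous_const.prodMk continuous_id
      exact (hVo.preimage this).mem_nhds hp
    filter_upwards [hmem] with s hs
    exact (hpt x s hs).deriv
  have hkey : ∀ p ∈ V, f'' p ((1:ℝ), (0:ℝ)) ((1:ℝ), (0:ℝ)) = f'' p ((0:ℝ), (1:ℝ)) ((0:ℝ), (1:ℝ)) := by
    rintro ⟨x, t⟩ hp
    have h1 := (hpxx x t hp).deriv
    have h2 := (hptt x t hp).deriv
    rw [← h1, ← h2]
    exact hwave x t hp
  have hdiag : ∀ p ∈ V, f'' p ((1:ℝ), (-1:ℝ)) ((1:ℝ), (1:ℝ)) = 0 := by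
    intro p hp
    have e1 := hkey p hp
    have e2 := hsymm p hp ((1:ℝ), (0:ℝ)) ((0:ℝ), (1:ℝ))
    have h1 : ((1:ℝ), (-1:ℝ)) = ((1:ℝ), (0:ℝ)) - ((0:ℝ), (1:ℝ)) := by
      simp [Prod.ext_iff]
    have h2 : ((1:ℝ), (1:ℝ)) = ((1:ℝ), (0:ℝ)) + ((0:ℝ), (1:ℝ)) := by
      simp [Prod.ext_iff]
    rw [h1, h2, map_sub, ContinuousLinearMap.sub_apply, map_add, map_add]
    linarith
  -- membership of the diagonal coordinates square
  have hmemV : ∀ u v : ℝ, |u| < 2*b → |v| < 2*b → (((u+v)/2, (u-v)/2) : ℝ × ℝ) ∈ V := by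
    intro u v hu hv
    have key : |(u+v)/2| + |(u-v)/2| ≤ max |u| |v| := by
      rcases abs_cases ((u+v)/2) with ⟨h1, h1'⟩ | ⟨h1, h1'⟩ <;>
        rcases abs_cases ((u-v)/2) with ⟨h2, h2'⟩ | ⟨h2, h2'⟩ <;>
        rcases abs_cases u with ⟨h3, h3'⟩ | ⟨h3, h3'⟩ <;>
        rcases abs_cases v with ⟨h4, h4'⟩ | ⟨h4, h4'⟩ <;>
        rcases max_cases |u| |v| with ⟨h5, h5'⟩ | ⟨h5, h5'⟩ <;>
        linarith
    exact lt_of_le_of_lt key (max_lt hu hv)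
  -- derivative of u ↦ w ((u+v)/2) ((u-v)/2)
  have hWu : ∀ u v : ℝ, |u| < 2*b → |v| < 2*b →
      HasDerivAt (fun u' => w ((u'+v)/2) ((u'-v)/2))
        (f' ((u+v)/2, (u-v)/2) ((1:ℝ)/2, (1:ℝ)/2)) u := by
    intro u v hu hv
    have hline : HasDerivAt (fun u' : ℝ => (((u'+v)/2, (u'-v)/2) : ℝ × ℝ)) (((1:ℝ)/2, (1:ℝ)/2)) u := by
      exact (((hasDerivAt_id u).add_const v).div_const 2).prodMk
        (((hasDerivAt_id u).sub_const v).div_const 2)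
    exact (hdf _ (hmemV u v hu hv)).comp_hasDerivAt u hline
  -- the function v ↦ ∂ᵤW (u,v) is constant in v
  have hGconst : ∀ u v : ℝ, |u| < 2*b → |v| < 2*b →
      f' ((u+v)/2, (u-v)/2) ((1:ℝ)/2, (1:ℝ)/2) = f' ((u+0)/2, (u-0)/2) ((1:ℝ)/2, (1:ℝ)/2) := by
    intro u v hu hv
    have h0 : (0:ℝ) ∈ Ioo (-(2*b)) (2*b) := by constructor <;> linarith
    have hv' : v ∈ Ioo (-(2*b)) (2*b) := abs_lt.mp hv
    refine waveAux_const (g := fun s' => f' ((u+s')/2, (u-s')/2) ((1:ℝ)/2, (1:ℝ)/2))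
      (convex_Ioo _ _) isOpen_Ioo ?_ hv' h0
    intro s hs
    have hs' : |s| < 2*b := abs_lt.mpr ⟨hs.1, hs.2⟩
    have hline : HasDerivAt (fun s' : ℝ => (((u+s')/2, (u-s')/2) : ℝ × ℝ)) (((1:ℝ)/2, -(1:ℝ)/2)) s := by
      have h := (((hasDerivAt_const s u).add (hasDerivAt_id s)).div_const 2).prodMk
        ((((hasDerivAt_const s u).sub (hasDerivAt_id s)).div_const 2))
      convert h using 2 <;> norm_num
    have hcurve : HasDerivAt (fun s' => f' ((u+s')/2, (u-s')/2))
        (f'' ((u+s)/2, (u-s)/2) ((1:ℝ)/2, -(1:ℝ)/2)) s :=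
      (hdf' _ (hmemV u s hu hs')).comp_hasDerivAt s hline
    have happ : HasDerivAt (fun s' => f' ((u+s')/2, (u-s')/2) ((1:ℝ)/2, (1:ℝ)/2))
        (f'' ((u+s)/2, (u-s)/2) ((1:ℝ)/2, -(1:ℝ)/2) ((1:ℝ)/2, (1:ℝ)/2)) s := by
      simpa using hcurve.clm_apply (hasDerivAt_const s (((1:ℝ)/2, (1:ℝ)/2)))
    have hz : f'' ((u+s)/2, (u-s)/2) ((1:ℝ)/2, -(1:ℝ)/2) ((1:ℝ)/2, (1:ℝ)/2) = 0 := by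
      have ha : (((1:ℝ)/2, -(1:ℝ)/2) : ℝ × ℝ) = (2⁻¹ : ℝ) • ((1:ℝ), (-1:ℝ)) := by
        norm_num [Prod.ext_iff]
      have hbv : (((1:ℝ)/2, (1:ℝ)/2) : ℝ × ℝ) = (2⁻¹ : ℝ) • ((1:ℝ), (1:ℝ)) := by
        norm_num [Prod.ext_iff]
      simp only [ha, hbv, map_smul, ContinuousLinearMap.smul_apply,
        hdiag _ (hmemV u s hu hs'), smul_zero]
    rw [hz] at happ
    exact happ
  -- the Goursat identity on the open region
  have key : ∀ u ∈ Ioo (-(2*b)) (2*b), ∀ v ∈ Ioo (-(2*b)) (2*b),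
      w ((u+v)/2) ((u-v)/2) = w (u/2) (u/2) + w (v/2) (-(v/2)) - w 0 0 := by
    intro u hu v hv
    have hu' : |u| < 2*b := abs_lt.mpr ⟨hu.1, hu.2⟩
    have hv' : |v| < 2*b := abs_lt.mpr ⟨hv.1, hv.2⟩
    have h0 : (0:ℝ) ∈ Ioo (-(2*b)) (2*b) := by constructor <;> linarith
    have h0' : |(0:ℝ)| < 2*b := by rw [abs_zero]; linarith
    have hgconst : (fun u' => w ((u'+v)/2) ((u'-v)/2) - w ((u'+0)/2) ((u'-0)/2)) u
        = (fun u' => w ((u'+v)/2) ((u'-v)/2) - w ((u'+0)/2) ((u'-0)/2)) 0 := by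
      refine waveAux_const
        (g := fun u' => w ((u'+v)/2) ((u'-v)/2) - w ((u'+0)/2) ((u'-0)/2))
        (convex_Ioo _ _) isOpen_Ioo ?_ hu h0
      intro y hy
      have hy' : |y| < 2*b := abs_lt.mpr ⟨hy.1, hy.2⟩
      have d1 := hWu y v hy' hv'
      have d2 := hWu y 0 hy' h0'
      have := d1.sub d2
      rw [hGconst y v hy' hv'] at this
      simpa [Pi.sub_def] using this
    have e1 : (u+0)/2 = u/2 := by ring
    have e2 : (u-0)/2 = u/2 := by ring
    have e3 : ((0:ℝ)+v)/2 = v/2 := by ring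
    have e4 : ((0:ℝ)-v)/2 = -(v/2) := by ring
    have e5 : ((0:ℝ)+0)/2 = (0:ℝ) := by norm_num
    have e6 : ((0:ℝ)-0)/2 = (0:ℝ) := by norm_num
    simp only [e1, e2, e3, e4, e5, e6] at hgconst
    linarith [hgconst]
  -- extension to the boundary by continuity
  have hScont : ContinuousOn f S := hw.continuousOn
  set e : ℝ × ℝ → ℝ := fun p =>
    w p.1 p.2 - (w ((p.1+p.2)/2) ((p.1+p.2)/2) + w ((p.1-p.2)/2) (-((p.1-p.2)/2)) - w 0 0)
    with he
  have hm1 : MapsTo (fun p : ℝ × ℝ => (((p.1+p.2)/2, (p.1+p.2)/2) : ℝ × ℝ)) S S := by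
    intro p hp
    simp only [hSdef, mem_setOf_eq] at hp ⊢
    have h1 : |(p.1+p.2)/2| = |p.1+p.2|/2 := by rw [abs_div]; norm_num
    have h2 : |p.1+p.2| ≤ |p.1| + |p.2| := abs_add_le _ _
    linarith
  have hm2 : MapsTo (fun p : ℝ × ℝ => (((p.1-p.2)/2, -((p.1-p.2)/2)) : ℝ × ℝ)) S S := by
    intro p hp
    simp only [hSdef, mem_setOf_eq] at hp ⊢
    have h1 : |(p.1-p.2)/2| = |p.1-p.2|/2 := by rw [abs_div]; norm_num
    have h2 : |p.1-p.2| ≤ |p.1| + |p.2| := by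
      simpa [sub_eq_add_neg] using abs_add_le p.1 (-p.2)
    rw [abs_neg]
    linarith
  have hecont : ContinuousOn e S := by
    have cm1 : Continuous (fun p : ℝ × ℝ => (((p.1+p.2)/2, (p.1+p.2)/2) : ℝ × ℝ)) := by fun_prop
    have cm2 : Continuous (fun p : ℝ × ℝ => (((p.1-p.2)/2, -((p.1-p.2)/2)) : ℝ × ℝ)) := by
      fun_prop
    have c1 : ContinuousOn (fun p : ℝ × ℝ => w ((p.1+p.2)/2) ((p.1+p.2)/2)) S :=
      hScont.comp cm1.continuousOn hm1
    have c2 : ContinuousOn (fun p : ℝ × ℝ => w ((p.1-p.2)/2) (-((p.1-p.2)/2))) S :=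
      hScont.comp cm2.continuousOn hm2
    exact hScont.sub ((c1.add c2).sub continuousOn_const)
  have hzero : ∀ p ∈ V, e p = 0 := by
    rintro ⟨x, t⟩ hp
    simp only [hVdef, mem_setOf_eq] at hp
    have hu : x + t ∈ Ioo (-(2*b)) (2*b) := by
      constructor <;> (cases abs_cases x <;> cases abs_cases t <;> linarith)
    have hv : x - t ∈ Ioo (-(2*b)) (2*b) := by
      constructor <;> (cases abs_cases x <;> cases abs_cases t <;> linarith)
    have hk := key (x+t) hu (x-t) hv
    have e1 : ((x+t)+(x-t))/2 = x := by ring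
    have e2 : ((x+t)-(x-t))/2 = t := by ring
    rw [e1, e2] at hk
    show w x t - _ = 0
    simp only []
    linarith [hk]
  intro x t hSx
  set F : ℝ → ℝ := fun θ => e (θ*x, θ*t) with hFdef
  have hmemS : ∀ θ ∈ Icc (0:ℝ) 1, ((θ*x, θ*t) : ℝ × ℝ) ∈ S := by
    intro θ hθ
    simp only [hSdef, mem_setOf_eq]
    have h1 : |θ*x| = θ*|x| := by rw [abs_mul, abs_of_nonneg hθ.1]
    have h2 : |θ*t| = θ*|t| := by rw [abs_mul, abs_of_nonneg hθ.1]
    have h3 : θ*(|x|+|t|) ≤ 1*(2*b) :=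
      mul_le_mul hθ.2 hSx (by positivity) zero_le_one
    linarith
  have hmemVθ : ∀ θ ∈ Ico (0:ℝ) 1, ((θ*x, θ*t) : ℝ × ℝ) ∈ V := by
    intro θ hθ
    simp only [hVdef, mem_setOf_eq]
    have h1 : |θ*x| = θ*|x| := by rw [abs_mul, abs_of_nonneg hθ.1]
    have h2 : |θ*t| = θ*|t| := by rw [abs_mul, abs_of_nonneg hθ.1]
    have h3 : θ*(|x|+|t|) ≤ θ*(2*b) := mul_le_mul_of_nonneg_left hSx hθ.1
    have h4 : θ*(2*b) < 1*(2*b) := mul_lt_mul_of_pos_right hθ.2 (by linarith)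
    linarith
  have hFc : ContinuousOn F (Icc 0 1) := by
    have hc : Continuous (fun θ : ℝ => ((θ*x, θ*t) : ℝ × ℝ)) := by fun_prop
    exact hecont.comp hc.continuousOn hmemS
  have h1 : Tendsto F (𝓝[Icc (0:ℝ) 1] 1) (𝓝 (F 1)) :=
    hFc 1 (by constructor <;> norm_num)
  have h2 : Tendsto F (𝓝[Ico (0:ℝ) 1] 1) (𝓝 (F 1)) :=
    h1.mono_left (nhdsWithin_mono _ Ico_subset_Icc_self)
  have h3 : Tendsto F (𝓝[Ico (0:ℝ) 1] 1) (𝓝 0) := by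
    refine Tendsto.congr' ?_ tendsto_const_nhds
    filter_upwards [self_mem_nhdsWithin] with θ hθ
    exact (hzero _ (hmemVθ θ hθ)).symm
  have hne : (𝓝[Ico (0:ℝ) 1] (1:ℝ)).NeBot := by
    rw [nhdsWithin_Ico_eq_nhdsLT one_pos]
    exact inferInstance
  have hF1 : F 1 = 0 := tendsto_nhds_unique h2 h3
  have hfin : e (x, t) = 0 := by
    have : ((1:ℝ)*x, (1:ℝ)*t) = ((x, t) : ℝ × ℝ) := by norm_num
    rw [hFdef] at hF1
    simpa [this] using hF1
  have : w x t - (w ((x+t)/2) ((x+t)/2) + w ((x-t)/2) (-((x-t)/2)) - w 0 0) = 0 := hfin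
  linarith


/-- Runge-type theorem for the wave equation: a `C²` solution of the wave
equation on the closed square `|x| + |t| ≤ 2b` can be uniformly approximated
there by finite linear combinations of the wave polynomials. -/
theorem stmt_5 (b : ℝ) (hb : 0 < b) (w : ℝ → ℝ → ℝ)
    (hw : ContDiffOn ℝ 2 (fun p : ℝ × ℝ => w p.1 p.2) {p : ℝ × ℝ | |p.1| + |p.2| ≤ 2 * b})
    (hwave : ∀ x t : ℝ, |x| + |t| < 2 * b →
        deriv (fun y => deriv (fun z => w z t) y) x =
          deriv (fun s => deriv (fun z => w x z) s) t) :
    ∀ ε > 0, ∃ (N : ℕ) (a : ℕ → ℝ), ∀ x t : ℝ, |x| + |t| ≤ 2 * b →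
      |w x t - ∑ m ∈ Finset.range (N + 1), a m * wavePoly m x t| < ε := by
  intro ε hε
  have goursat := waveAux_goursat b hb w hw hwave
  set φ : ℝ → ℝ := fun u => w (u/2) (u/2) with hφ
  set ψ : ℝ → ℝ := fun v => w (v/2) (-(v/2)) - w 0 0 with hψ
  have hScont : ContinuousOn (fun p : ℝ × ℝ => w p.1 p.2)
      {p : ℝ × ℝ | |p.1| + |p.2| ≤ 2 * b} := hw.continuousOn
  have hφc : ContinuousOn φ (Set.Icc (-(2*b)) (2*b)) := by
    have hc : Continuous (fun u : ℝ => ((u/2, u/2) : ℝ × ℝ)) := by fun_prop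
    refine hScont.comp hc.continuousOn ?_
    intro u hu
    simp only [Set.mem_setOf_eq]
    have h1 : |u/2| = |u|/2 := by rw [abs_div]; norm_num
    have h2 : |u| ≤ 2*b := abs_le.mpr ⟨hu.1, hu.2⟩
    linarith
  have hψc : ContinuousOn ψ (Set.Icc (-(2*b)) (2*b)) := by
    have hc : Continuous (fun v : ℝ => ((v/2, -(v/2)) : ℝ × ℝ)) := by fun_prop
    refine ContinuousOn.sub (hScont.comp hc.continuousOn ?_) continuousOn_const
    intro v hv
    simp only [Set.mem_setOf_eq, abs_neg]
    have h1 : |v/2| = |v|/2 := by rw [abs_div]; norm_num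
    have h2 : |v| ≤ 2*b := abs_le.mpr ⟨hv.1, hv.2⟩
    linarith
  obtain ⟨P, hP⟩ := exists_polynomial_near_of_continuousOn (-(2*b)) (2*b) φ hφc (ε/2)
    (by linarith)
  obtain ⟨Q, hQ⟩ := exists_polynomial_near_of_continuousOn (-(2*b)) (2*b) ψ hψc (ε/2)
    (by linarith)
  set M := max P.natDegree Q.natDegree with hM
  refine ⟨2*M, fun m => if m = 0 then P.coeff 0 + Q.coeff 0
    else if m % 2 = 1 then P.coeff ((m+1)/2) + Q.coeff ((m+1)/2)
    else P.coeff (m/2) - Q.coeff (m/2), ?_⟩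
  intro x t hxt
  have hsum := waveAux_sum (fun n => P.coeff n) (fun n => Q.coeff n) M x t
  have hPe : P.eval (x+t) = ∑ n ∈ Finset.range (M+1), P.coeff n * (x+t)^n :=
    Polynomial.eval_eq_sum_range' (Nat.lt_succ_of_le (le_max_left _ _)) _
  have hQe : Q.eval (x-t) = ∑ n ∈ Finset.range (M+1), Q.coeff n * (x-t)^n :=
    Polynomial.eval_eq_sum_range' (Nat.lt_succ_of_le (le_max_right _ _)) _
  have hgoal : ∑ m ∈ Finset.range (2*M + 1),
      (if m = 0 then P.coeff 0 + Q.coeff 0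
        else if m % 2 = 1 then P.coeff ((m+1)/2) + Q.coeff ((m+1)/2)
        else P.coeff (m/2) - Q.coeff (m/2)) * wavePoly m x t
      = P.eval (x+t) + Q.eval (x-t) := by
    rw [hsum, Finset.sum_add_distrib, ← hPe, ← hQe]
  rw [hgoal]
  have hu : x + t ∈ Set.Icc (-(2*b)) (2*b) :=
    Set.mem_Icc.mpr (abs_le.mp ((abs_add_le x t).trans hxt))
  have hv : x - t ∈ Set.Icc (-(2*b)) (2*b) := by
    have h2 : |x - t| ≤ |x| + |t| := by
      simpa [sub_eq_add_neg] using abs_add_le x (-t)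
    exact Set.mem_Icc.mpr (abs_le.mp (h2.trans hxt))
  have h1 := hP (x+t) hu
  have h2 := hQ (x-t) hv
  have hg : w x t = φ (x+t) + ψ (x-t) := by
    have hgg := goursat x t hxt
    simp only [hφ, hψ]
    linarith [hgg]
  rw [hg]
  have hre : φ (x+t) + ψ (x-t) - (P.eval (x+t) + Q.eval (x-t))
      = -((P.eval (x+t) - φ (x+t)) + (Q.eval (x-t) - ψ (x-t))) := by ring
  rw [hre, abs_neg]
  calc |(P.eval (x+t) - φ (x+t)) + (Q.eval (x-t) - ψ (x-t))|
      ≤ |P.eval (x+t) - φ (x+t)| + |Q.eval (x-t) - ψ (x-t)| := abs_add_le _ _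
    _ < ε/2 + ε/2 := add_lt_add h1 h2
    _ = ε := by ring
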